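/- The functions h₁ and h₃ are strictly decreasing in the energy: for all c, c′ with 2/√3 ≤ c < c′, one has h₁(c′) < h₁(c) and h₃(c′) < h₃(c), where h₁(c) = ∫_{π/3}^{2π/3} (1 − R⁻(c·sin ψ)²)⁻¹ dψ and h₃(c) = ∫_{π/3}^{2π/3} (R⁺(c·sin ψ)² − 1)⁻¹ dψ. -/

import Mathlib

open Real MeasureTheory Set

noncomputable def K (R : ℝ) : ℝ := Real.exp ((R ^ 2 - 1) / 2) / R




lemma K_hasDerivAt {R : ℝ} (hR : R ≠ 0) :
    HasDerivAt K (Real.exp ((R ^ 2 - 1) / 2) * (1 - (R ^ 2)⁻¹)) R := by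
  have h1 : HasDerivAt (fun R : ℝ => (R ^ 2 - 1) / 2) R R := by
    simpa using ((hasDerivAt_pow 2 R).sub_const 1).div_const 2
  have h2 : HasDerivAt (fun R : ℝ => Real.exp ((R ^ 2 - 1) / 2))
      (Real.exp ((R ^ 2 - 1) / 2) * R) R := (Real.hasDerivAt_exp _).comp R h1
  have h3 : HasDerivAt (fun R : ℝ => R⁻¹) (-(R ^ 2)⁻¹) R := by
    simpa using hasDerivAt_inv hR
  have h4 := h2.mul h3
  have : K = fun R : ℝ => Real.exp ((R ^ 2 - 1) / 2) * R⁻¹ := by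
    funext y; simp [K, div_eq_mul_inv]
  rw [this]
  refine h4.congr_deriv ?_
  rw [mul_assoc, mul_inv_cancel₀ hR]
  ring

lemma K_continuousOn : ContinuousOn K {x : ℝ | x ≠ 0} := by
  intro x hx
  exact ((K_hasDerivAt hx).continuousAt).continuousWithinAt

lemma K_strictAntiOn : StrictAntiOn K (Set.Ioc 0 1) := by
  apply strictAntiOn_of_deriv_neg (convex_Ioc 0 1)
  · exact K_continuousOn.mono (fun x hx => ne_of_gt hx.1)
  · intro x hx
    rw [interior_Ioc] at hx
    rw [(K_hasDerivAt (ne_of_gt hx.1)).deriv]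
    have h1 : (0:ℝ) < Real.exp ((x ^ 2 - 1) / 2) := Real.exp_pos _
    have h2 : (1:ℝ) < (x ^ 2)⁻¹ := by
      rw [lt_inv_comm₀] <;> nlinarith [hx.1, hx.2]
    nlinarith

lemma K_strictMonoOn : StrictMonoOn K (Set.Ici 1) := by
  apply strictMonoOn_of_deriv_pos (convex_Ici 1)
  · exact K_continuousOn.mono (fun x hx => ne_of_gt (lt_of_lt_of_le zero_lt_one hx))
  · intro x hx
    rw [interior_Ici] at hx
    have hx1 : (1:ℝ) < x := hx
    rw [(K_hasDerivAt (by linarith)).deriv]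
    have h1 : (0:ℝ) < Real.exp ((x ^ 2 - 1) / 2) := Real.exp_pos _
    have h2 : (x ^ 2)⁻¹ < 1 := by
      rw [inv_lt_one_iff₀]; right; nlinarith
    nlinarith


lemma exp_le_one_add_two_mul {t : ℝ} (h0 : 0 ≤ t) (h1 : t ≤ 1) :
    Real.exp t ≤ 1 + 2 * t := by
  have hc := convexOn_exp.2 (Set.mem_univ (0:ℝ)) (Set.mem_univ (1:ℝ))
    (show (0:ℝ) ≤ 1 - t by linarith) h0 (show 1 - t + t = 1 by ring)
  simp only [smul_eq_mul, mul_zero, mul_one, zero_add, Real.exp_zero] at hc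
  have he := Real.exp_one_lt_d9
  nlinarith

lemma inv_le_exp_div {u : ℝ} (h0 : 0 ≤ u) (h1 : u < 1) :
    (1 - u)⁻¹ ≤ Real.exp (u / (1 - u)) := by
  have h : (0:ℝ) < 1 - u := by linarith
  have h2 := Real.add_one_le_exp (u / (1 - u))
  have h3 : (1 - u)⁻¹ = u / (1 - u) + 1 := by field_simp; ring
  linarith

lemma exp_div_le_one_add {v : ℝ} (h0 : 0 ≤ v) :
    Real.exp (v / (1 + v)) ≤ 1 + v := by
  have h : (0:ℝ) < 1 + v := by linarith
  have h2 := Real.add_one_le_exp (-(v / (1 + v)))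
  rw [Real.exp_neg] at h2
  have h3 : -(v / (1 + v)) + 1 = (1 + v)⁻¹ := by field_simp; ring
  rw [h3] at h2
  have h4 := Real.exp_pos (v / (1 + v))
  exact (inv_le_inv₀ h h4).mp h2

lemma rpow_neg_half_eq {y : ℝ} (hy : 0 ≤ y) :
    y ^ (-(1/2) : ℝ) = (Real.sqrt y)⁻¹ := by
  rw [Real.rpow_neg hy, ← Real.sqrt_eq_rpow]



lemma sqrt3_pos : (0:ℝ) < Real.sqrt 3 := Real.sqrt_pos.2 (by norm_num)

lemma sqrt3_lt_two : Real.sqrt 3 < 2 := by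
  nlinarith [Real.sq_sqrt (by norm_num : (0:ℝ) ≤ 3), Real.sqrt_nonneg 3]

lemma two_div_sqrt3_mul : (2 / Real.sqrt 3) * (Real.sqrt 3 / 2) = 1 := by
  field_simp

lemma sin_gt_sqrt3_div_two {ψ : ℝ} (hψ : ψ ∈ Ioo (π/3) (2*π/3)) :
    Real.sqrt 3 / 2 < Real.sin ψ := by
  rcases le_or_gt ψ (π/2) with h | h
  · have h2 := Real.sin_lt_sin_of_lt_of_le_pi_div_two (x := π/3) (y := ψ)
      (by linarith [pi_pos]) h hψ.1
    rwa [Real.sin_pi_div_three] at h2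
  · have h2 := Real.sin_lt_sin_of_lt_of_le_pi_div_two (x := π/3) (y := π - ψ)
      (by linarith [pi_pos]) (by linarith) (by linarith [hψ.2])
    rwa [Real.sin_pi_div_three, Real.sin_pi_sub] at h2

lemma one_lt_mul_sin {c ψ : ℝ} (hc : 2 / Real.sqrt 3 ≤ c) (hψ : ψ ∈ Ioo (π/3) (2*π/3)) :
    1 < c * Real.sin ψ := by
  have hs := sin_gt_sqrt3_div_two hψ
  have hc0 : (0:ℝ) < 2 / Real.sqrt 3 := by positivity
  calc (1:ℝ) = (2 / Real.sqrt 3) * (Real.sqrt 3 / 2) := two_div_sqrt3_mul.symm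
    _ < c * Real.sin ψ := mul_lt_mul' hc hs (by positivity) (lt_of_lt_of_le hc0 hc)

lemma sin_two_pi_div_three' : Real.sin (2*π/3) = Real.sqrt 3 / 2 := by
  rw [show 2*π/3 = π - π/3 by ring, Real.sin_pi_sub, Real.sin_pi_div_three]

lemma chord_left {c ψ : ℝ} (hc : 2 / Real.sqrt 3 ≤ c) (h1 : π/3 ≤ ψ) (h2 : ψ ≤ π/2) :
    (6/π) * (2/Real.sqrt 3 - 1) * (ψ - π/3) ≤ c * Real.sin ψ - 1 := by
  have hπ := pi_pos
  set t := (ψ - π/3)/(π/6) with ht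
  have ht6 : t * (π/6) = ψ - π/3 := by
    rw [ht]; exact div_mul_cancel₀ _ (by positivity)
  have ht0 : 0 ≤ t := div_nonneg (by linarith) (by linarith)
  have ht1 : t ≤ 1 := by
    rw [ht, div_le_one (by linarith)]; linarith
  have hcon := strictConcaveOn_sin_Icc.concaveOn.2
    (show π/3 ∈ Icc 0 π by constructor <;> linarith)
    (show π/2 ∈ Icc 0 π by constructor <;> linarith)
    (show (0:ℝ) ≤ 1 - t by linarith) ht0 (show 1 - t + t = 1 by ring)
  simp only [smul_eq_mul] at hcon
  rw [show (1-t)*(π/3) + t*(π/2) = ψ by nlinarith [ht6],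
      Real.sin_pi_div_three, Real.sin_pi_div_two] at hcon
  -- hcon : (1-t) * (√3/2) + t * 1 ≤ sin ψ
  have hs3 := sqrt3_pos
  have hsin0 : 0 ≤ Real.sin ψ := by nlinarith
  have hcs : (2/Real.sqrt 3) * Real.sin ψ ≤ c * Real.sin ψ :=
    mul_le_mul_of_nonneg_right hc hsin0
  have hkey : (2/Real.sqrt 3) * ((1-t) * (Real.sqrt 3/2) + t * 1)
      = (1 - t) + (2/Real.sqrt 3) * t := by
    field_simp
  have h6 : (6/π) * (ψ - π/3) = t := by
    rw [ht]; field_simp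
  have hstep : (1 - t) + (2/Real.sqrt 3) * t ≤ c * Real.sin ψ := by
    rw [← hkey]
    exact le_trans (mul_le_mul_of_nonneg_left hcon (by positivity)) hcs
  calc (6/π) * (2/Real.sqrt 3 - 1) * (ψ - π/3)
      = (2/Real.sqrt 3 - 1) * ((6/π) * (ψ - π/3)) := by ring
    _ = (2/Real.sqrt 3 - 1) * t := by rw [h6]
    _ ≤ c * Real.sin ψ - 1 := by nlinarith [hstep]

lemma chord_right {c ψ : ℝ} (hc : 2 / Real.sqrt 3 ≤ c) (h1 : π/2 ≤ ψ) (h2 : ψ ≤ 2*π/3) :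
    (6/π) * (2/Real.sqrt 3 - 1) * (2*π/3 - ψ) ≤ c * Real.sin ψ - 1 := by
  have hπ := pi_pos
  set t := (2*π/3 - ψ)/(π/6) with ht
  have ht6 : t * (π/6) = 2*π/3 - ψ := by
    rw [ht]; exact div_mul_cancel₀ _ (by positivity)
  have ht0 : 0 ≤ t := div_nonneg (by linarith) (by linarith)
  have ht1 : t ≤ 1 := by
    rw [ht, div_le_one (by linarith)]; linarith
  have hcon := strictConcaveOn_sin_Icc.concaveOn.2
    (show π/2 ∈ Icc 0 π by constructor <;> linarith)
    (show 2*π/3 ∈ Icc 0 π by constructor <;> linarith)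
    ht0 (show (0:ℝ) ≤ 1 - t by linarith) (show t + (1 - t) = 1 by ring)
  simp only [smul_eq_mul] at hcon
  rw [show t*(π/2) + (1-t)*(2*π/3) = ψ by nlinarith [ht6],
      Real.sin_pi_div_two, sin_two_pi_div_three'] at hcon
  -- hcon : t * 1 + (1-t) * (√3/2) ≤ sin ψ
  have hs3 := sqrt3_pos
  have hsin0 : 0 ≤ Real.sin ψ := by nlinarith
  have hcs : (2/Real.sqrt 3) * Real.sin ψ ≤ c * Real.sin ψ :=
    mul_le_mul_of_nonneg_right hc hsin0
  have hkey : (2/Real.sqrt 3) * (t * 1 + (1-t) * (Real.sqrt 3/2))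
      = (1 - t) + (2/Real.sqrt 3) * t := by
    field_simp; ring
  have h6 : (6/π) * (2*π/3 - ψ) = t := by
    rw [ht]; field_simp
  have hstep : (1 - t) + (2/Real.sqrt 3) * t ≤ c * Real.sin ψ := by
    rw [← hkey]
    exact le_trans (mul_le_mul_of_nonneg_left hcon (by positivity)) hcs
  calc (6/π) * (2/Real.sqrt 3 - 1) * (2*π/3 - ψ)
      = (2/Real.sqrt 3 - 1) * ((6/π) * (2*π/3 - ψ)) := by ring
    _ = (2/Real.sqrt 3 - 1) * t := by rw [h6]
    _ ≤ c * Real.sin ψ - 1 := by nlinarith [hstep]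

lemma k_pos : 0 < (6/π) * (2/Real.sqrt 3 - 1) := by
  have hπ := pi_pos
  have h1 : (1:ℝ) < 2 / Real.sqrt 3 := by
    rw [lt_div_iff₀ sqrt3_pos, one_mul]; exact sqrt3_lt_two
  have : (0:ℝ) < 6/π := by positivity
  nlinarith

lemma integ_aux {F : ℝ → ℝ} (hcont : ContinuousOn F (Ioi 1))
    (hpos : ∀ x, 1 < x → 0 ≤ F x)
    {D C : ℝ} (hD : 0 ≤ D) (hC : 0 ≤ C)
    (hbd : ∀ x, 1 < x → F x ≤ D + C * (x-1) ^ (-(1/2):ℝ))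
    {c : ℝ} (hc : 2/Real.sqrt 3 ≤ c) :
    IntegrableOn (fun ψ => F (c * Real.sin ψ)) (Ioo (π/3) (2*π/3)) := by
  have hπ := pi_pos
  set k := (6/π) * (2/Real.sqrt 3 - 1) with hk
  have hk0 : 0 < k := k_pos
  set g : ℝ → ℝ := fun ψ => D + C * k ^ (-(1/2):ℝ) *
    ((ψ - π/3) ^ (-(1/2):ℝ) + (2*π/3 - ψ) ^ (-(1/2):ℝ)) with hg
  have hii : IntervalIntegrable g volume (π/3) (2*π/3) := by
    apply IntervalIntegrable.add
    · exact intervalIntegrable_const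
    · apply IntervalIntegrable.const_mul
      apply IntervalIntegrable.add
      · have h := (intervalIntegral.intervalIntegrable_rpow' (a := 0) (b := π/3)
          (r := -(1/2)) (by norm_num)).comp_sub_right (π/3)
        rw [show (0:ℝ) + π/3 = π/3 by ring, show π/3 + π/3 = 2*π/3 by ring] at h
        exact h
      · have h := (intervalIntegral.intervalIntegrable_rpow' (a := 0) (b := π/3)
          (r := -(1/2)) (by norm_num)).comp_sub_left (2*π/3)
        rw [show 2*π/3 - 0 = 2*π/3 by ring, show 2*π/3 - π/3 = π/3 by ring] at h
        exact h.symm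
  have hgint : IntegrableOn g (Ioo (π/3) (2*π/3)) := by
    have h := hii.1
    rw [intervalIntegrable_iff, uIoc_of_le (by linarith : π/3 ≤ 2*π/3)] at hii
    exact hii.mono_set Ioo_subset_Ioc_self
  have hfc : ContinuousOn (fun ψ => F (c * Real.sin ψ)) (Ioo (π/3) (2*π/3)) :=
    hcont.comp ((continuous_const.mul continuous_sin).continuousOn)
      (fun ψ hψ => mem_Ioi.2 (one_lt_mul_sin hc hψ))
  apply Integrable.mono' hgint (hfc.aestronglyMeasurable measurableSet_Ioo)
  rw [ae_restrict_iff' measurableSet_Ioo]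
  apply Filter.Eventually.of_forall
  intro ψ hψ
  have h1 : 1 < c * Real.sin ψ := one_lt_mul_sin hc hψ
  rw [Real.norm_eq_abs, abs_of_nonneg (hpos _ h1)]
  refine (hbd _ h1).trans ?_
  have hknn : (0:ℝ) ≤ k ^ (-(1/2):ℝ) := Real.rpow_nonneg hk0.le _
  have hA : (0:ℝ) ≤ (ψ - π/3) ^ (-(1/2):ℝ) := Real.rpow_nonneg (by linarith [hψ.1]) _
  have hB : (0:ℝ) ≤ (2*π/3 - ψ) ^ (-(1/2):ℝ) := Real.rpow_nonneg (by linarith [hψ.2]) _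
  have hmain : (c * Real.sin ψ - 1) ^ (-(1/2):ℝ) ≤
      k ^ (-(1/2):ℝ) * ((ψ - π/3) ^ (-(1/2):ℝ) + (2*π/3 - ψ) ^ (-(1/2):ℝ)) := by
    rcases le_or_gt ψ (π/2) with hhalf | hhalf
    · have hch := chord_left hc hψ.1.le hhalf
      have hp1 : (0:ℝ) < ψ - π/3 := by linarith [hψ.1]
      have hle := Real.rpow_le_rpow_of_nonpos (mul_pos hk0 hp1) hch
        (by norm_num : (-(1/2):ℝ) ≤ 0)
      rw [Real.mul_rpow hk0.le hp1.le] at hle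
      nlinarith [mul_nonneg hknn hB]
    · have hch := chord_right hc hhalf.le hψ.2.le
      have hp1 : (0:ℝ) < 2*π/3 - ψ := by linarith [hψ.2]
      have hle := Real.rpow_le_rpow_of_nonpos (mul_pos hk0 hp1) hch
        (by norm_num : (-(1/2):ℝ) ≤ 0)
      rw [Real.mul_rpow hk0.le hp1.le] at hle
      nlinarith [mul_nonneg hknn hA]
  have h2 : C * (c * Real.sin ψ - 1) ^ (-(1/2):ℝ) ≤
      C * (k ^ (-(1/2):ℝ) * ((ψ - π/3) ^ (-(1/2):ℝ) + (2*π/3 - ψ) ^ (-(1/2):ℝ))) :=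
    mul_le_mul_of_nonneg_left hmain hC
  simp only [hg]
  nlinarith [h2]

lemma key_lt {F : ℝ → ℝ} (hcont : ContinuousOn F (Ioi 1))
    (hpos : ∀ x, 1 < x → 0 < F x)
    (hanti : ∀ x y, 1 < x → x < y → F y < F x)
    {D C : ℝ} (hD : 0 ≤ D) (hC : 0 ≤ C)
    (hbd : ∀ x, 1 < x → F x ≤ D + C * (x-1) ^ (-(1/2):ℝ))
    {c c' : ℝ} (hc : 2/Real.sqrt 3 ≤ c) (hcc' : c < c') :
    (∫ ψ in (π/3)..(2*π/3), F (c' * Real.sin ψ)) <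
      ∫ ψ in (π/3)..(2*π/3), F (c * Real.sin ψ) := by
  have hπ := pi_pos
  have hc' : 2/Real.sqrt 3 ≤ c' := hc.trans hcc'.le
  have hI := integ_aux hcont (fun x hx => (hpos x hx).le) hD hC hbd hc
  have hI' := integ_aux hcont (fun x hx => (hpos x hx).le) hD hC hbd hc'
  have hab : π/3 ≤ 2*π/3 := by linarith
  rw [intervalIntegral.integral_of_le hab, intervalIntegral.integral_of_le hab,
      MeasureTheory.integral_Ioc_eq_integral_Ioo, MeasureTheory.integral_Ioc_eq_integral_Ioo]
  have hlt : ∀ ψ ∈ Ioo (π/3) (2*π/3), F (c' * Real.sin ψ) < F (c * Real.sin ψ) := by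
    intro ψ hψ
    have h1 : 1 < c * Real.sin ψ := one_lt_mul_sin hc hψ
    have hsin : 0 < Real.sin ψ := lt_trans (by positivity) (sin_gt_sqrt3_div_two hψ)
    exact hanti _ _ h1 (by nlinarith)
  have hsub : 0 < ∫ ψ in Ioo (π/3) (2*π/3),
      (F (c * Real.sin ψ) - F (c' * Real.sin ψ)) := by
    have hint : IntegrableOn (fun ψ => F (c * Real.sin ψ) - F (c' * Real.sin ψ))
        (Ioo (π/3) (2*π/3)) := hI.sub hI'
    have hnn : (0 : ℝ → ℝ) ≤ᵐ[volume.restrict (Ioo (π/3) (2*π/3))]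
        (fun ψ => F (c * Real.sin ψ) - F (c' * Real.sin ψ)) := by
      rw [Filter.EventuallyLE, ae_restrict_iff' measurableSet_Ioo]
      apply Filter.Eventually.of_forall
      intro ψ hψ
      simp only [Pi.zero_apply]
      exact sub_nonneg.2 (hlt ψ hψ).le
    rw [setIntegral_pos_iff_support_of_nonneg_ae hnn hint]
    · have hsup : Ioo (π/3) (2*π/3) ⊆
          Function.support (fun ψ => F (c * Real.sin ψ) - F (c' * Real.sin ψ)) :=
        fun ψ hψ => sub_ne_zero.2 (ne_of_gt (hlt ψ hψ))
      calc (0:ENNReal) < volume (Ioo (π/3) (2*π/3)) := by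
            rw [Real.volume_Ioo]
            exact ENNReal.ofReal_pos.2 (by linarith)
        _ ≤ volume (Function.support
              (fun ψ => F (c * Real.sin ψ) - F (c' * Real.sin ψ)) ∩ Ioo (π/3) (2*π/3)) :=
            measure_mono (subset_inter hsup Subset.rfl)
  rw [MeasureTheory.integral_sub hI hI'] at hsub
  linarith


section RmRp
variable {Rm Rp : ℝ → ℝ}
variable (hRm : ∀ x : ℝ, 1 < x → 0 < Rm x ∧ Rm x < 1 ∧ K (Rm x) = x)
variable (hRp : ∀ x : ℝ, 1 < x → 1 < Rp x ∧ K (Rp x) = x)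

include hRm in
lemma Rm_mem {x : ℝ} (hx : 1 < x) : Rm x ∈ Set.Ioc 0 1 :=
  ⟨(hRm x hx).1, (hRm x hx).2.1.le⟩

include hRm in
lemma Rm_anti {x y : ℝ} (hx : 1 < x) (hxy : x < y) : Rm y < Rm x := by
  have hy : 1 < y := hx.trans hxy
  have h := K_strictAntiOn.lt_iff_gt (Rm_mem hRm hx) (Rm_mem hRm hy)
  rw [(hRm x hx).2.2, (hRm y hy).2.2] at h
  exact h.mp hxy

include hRm in
lemma Rm_lt_of_K_lt {x r : ℝ} (hx : 1 < x) (hr : r ∈ Set.Ioc 0 1) (h : K r < x) :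
    Rm x < r := by
  have h2 := K_strictAntiOn.lt_iff_gt hr (Rm_mem hRm hx)
  rw [(hRm x hx).2.2] at h2
  exact h2.mp h

include hRm in
lemma lt_Rm_of_lt_K {x r : ℝ} (hx : 1 < x) (hr : r ∈ Set.Ioc 0 1) (h : x < K r) :
    r < Rm x := by
  have h2 := K_strictAntiOn.lt_iff_gt (Rm_mem hRm hx) hr
  rw [(hRm x hx).2.2] at h2
  exact h2.mp h

include hRm in
lemma Rm_continuousAt {x₀ : ℝ} (hx₀ : 1 < x₀) : ContinuousAt Rm x₀ := by
  have hmem := hRm x₀ hx₀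
  rw [ContinuousAt]
  apply tendsto_order.2
  constructor
  · intro a ha
    set a' := max a (Rm x₀ / 2) with ha'def
    have ha'0 : 0 < a' := lt_max_of_lt_right (half_pos hmem.1)
    have ha'R : a' < Rm x₀ := max_lt ha (by linarith [hmem.1])
    have ha'mem : a' ∈ Set.Ioc 0 1 := ⟨ha'0, (ha'R.trans hmem.2.1).le⟩
    have hKa' : x₀ < K a' := by
      rw [← hmem.2.2]
      exact (K_strictAntiOn.lt_iff_gt (Rm_mem hRm hx₀) ha'mem).mpr ha'R
    filter_upwards [IsOpen.mem_nhds isOpen_Ioo (show x₀ ∈ Ioo 1 (K a') from ⟨hx₀, hKa'⟩)]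
      with x hx
    exact lt_of_le_of_lt (le_max_left _ _) (lt_Rm_of_lt_K hRm hx.1 ha'mem hx.2)
  · intro b hb
    rcases lt_or_ge b 1 with hb1 | hb1
    · have hbm : b ∈ Set.Ioc 0 1 := ⟨lt_trans hmem.1 hb, hb1.le⟩
      have hKb : K b < x₀ := by
        rw [← hmem.2.2]
        exact (K_strictAntiOn.lt_iff_gt hbm (Rm_mem hRm hx₀)).mpr hb
      filter_upwards [IsOpen.mem_nhds isOpen_Ioi
        (show x₀ ∈ Ioi (max (K b) 1) from max_lt hKb hx₀)] with x hx
      have hx1 : 1 < x := (le_max_right _ _).trans_lt hx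
      exact Rm_lt_of_K_lt hRm hx1 hbm ((le_max_left _ _).trans_lt hx)
    · filter_upwards [IsOpen.mem_nhds isOpen_Ioi (show x₀ ∈ Ioi 1 from hx₀)] with x hx
      exact lt_of_lt_of_le (hRm x hx).2.1 hb1

include hRp in
lemma Rp_mem {x : ℝ} (hx : 1 < x) : Rp x ∈ Set.Ici 1 := (hRp x hx).1.le

include hRp in
lemma Rp_mono {x y : ℝ} (hx : 1 < x) (hxy : x < y) : Rp x < Rp y := by
  have hy : 1 < y := hx.trans hxy
  have h := K_strictMonoOn.lt_iff_lt (Rp_mem hRp hx) (Rp_mem hRp hy)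
  rw [(hRp x hx).2, (hRp y hy).2] at h
  exact h.mp hxy

include hRp in
lemma Rp_lt_of_lt_K {x r : ℝ} (hx : 1 < x) (hr : r ∈ Set.Ici 1) (h : x < K r) :
    Rp x < r := by
  have h2 := K_strictMonoOn.lt_iff_lt (Rp_mem hRp hx) hr
  rw [(hRp x hx).2] at h2
  exact h2.mp h

include hRp in
lemma lt_Rp_of_K_lt {x r : ℝ} (hx : 1 < x) (hr : r ∈ Set.Ici 1) (h : K r < x) :
    r < Rp x := by
  have h2 := K_strictMonoOn.lt_iff_lt hr (Rp_mem hRp hx)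
  rw [(hRp x hx).2] at h2
  exact h2.mp h

include hRp in
lemma Rp_continuousAt {x₀ : ℝ} (hx₀ : 1 < x₀) : ContinuousAt Rp x₀ := by
  have hmem := hRp x₀ hx₀
  rw [ContinuousAt]
  apply tendsto_order.2
  constructor
  · intro a ha
    rcases le_or_gt a 1 with ha1 | ha1
    · filter_upwards [IsOpen.mem_nhds isOpen_Ioi (show x₀ ∈ Ioi 1 from hx₀)] with x hx
      exact lt_of_le_of_lt ha1 (hRp x hx).1
    · have hKa : K a < x₀ := by
        rw [← hmem.2]
        exact (K_strictMonoOn.lt_iff_lt (mem_Ici.2 ha1.le) (Rp_mem hRp hx₀)).mpr ha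
      filter_upwards [IsOpen.mem_nhds isOpen_Ioi
        (show x₀ ∈ Ioi (max (K a) 1) from max_lt hKa hx₀)] with x hx
      have hx1 : 1 < x := (le_max_right _ _).trans_lt hx
      exact lt_Rp_of_K_lt hRp hx1 (mem_Ici.2 ha1.le) ((le_max_left _ _).trans_lt hx)
  · intro b hb
    have hb1 : 1 < b := hmem.1.trans hb
    have hKb : x₀ < K b := by
      rw [← hmem.2]
      exact (K_strictMonoOn.lt_iff_lt (Rp_mem hRp hx₀) (mem_Ici.2 hb1.le)).mpr hb
    filter_upwards [IsOpen.mem_nhds isOpen_Ioo (show x₀ ∈ Ioo 1 (K b) from ⟨hx₀, hKb⟩)]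
      with x hx
    exact Rp_lt_of_lt_K hRp hx.1 (mem_Ici.2 hb1.le) hx.2

include hRm in
lemma Rm_F_bound {x : ℝ} (hx : 1 < x) :
    (1 - Rm x ^ 2)⁻¹ ≤ 4/3 + Real.sqrt 5 * (x - 1) ^ (-(1/2) : ℝ) := by
  have hmem := hRm x hx
  set R := Rm x with hRdef
  have hx1 : (0:ℝ) < x - 1 := by linarith
  rcases le_or_gt x (K (1/2)) with hcase | hcase
  · have hR2 : (1/2 : ℝ) ≤ R := by
      by_contra h
      push_neg at h
      have h2 := (K_strictAntiOn.lt_iff_gt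
        (⟨by norm_num, by norm_num⟩ : (1/2:ℝ) ∈ Set.Ioc 0 1) (Rm_mem hRm hx)).mpr h
      rw [hmem.2.2] at h2; linarith
    set u := 1 - R with hu
    have hu0 : 0 < u := by simp only [hu]; linarith [hmem.2.1]
    have hu2 : u ≤ 1/2 := by simp only [hu]; linarith
    have key : x ≤ Real.exp (5/2 * u^2) := by
      rw [← hmem.2.2]
      have hinv : R⁻¹ ≤ Real.exp (u / R) := by
        have h := inv_le_exp_div hu0.le (by linarith : u < 1)
        rwa [show (1:ℝ) - u = R from by simp [hu]] at h
      calc K R = Real.exp ((R^2-1)/2) * R⁻¹ := div_eq_mul_inv _ _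
        _ ≤ Real.exp ((R^2-1)/2) * Real.exp (u / R) :=
            mul_le_mul_of_nonneg_left hinv (Real.exp_pos _).le
        _ = Real.exp ((R^2-1)/2 + u/R) := (Real.exp_add _ _).symm
        _ ≤ Real.exp (5/2 * u^2) := by
            apply Real.exp_le_exp.2
            have hRpos : (0:ℝ) < R := by linarith
            have hdiv : u / R ≤ u + 2*u^2 := by
              rw [div_le_iff₀ hRpos]
              nlinarith
            nlinarith
    have hx5u : x - 1 ≤ 5 * u^2 := by
      have ht : 5/2 * u^2 ≤ 1 := by nlinarith
      have h5 := exp_le_one_add_two_mul (by positivity) ht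
      nlinarith [key.trans h5]
    have hsq : Real.sqrt (x - 1) ≤ Real.sqrt 5 * u := by
      have h6 : Real.sqrt (x-1) ≤ Real.sqrt (5 * u^2) := Real.sqrt_le_sqrt hx5u
      rwa [Real.sqrt_mul (by norm_num) _, Real.sqrt_sq hu0.le] at h6
    have hden : u ≤ 1 - R^2 := by nlinarith [hmem.1]
    have hpos : (0:ℝ) < 1 - R^2 := lt_of_lt_of_le hu0 hden
    have hsx : 0 < Real.sqrt (x-1) := Real.sqrt_pos.2 hx1
    have h7 : (1 - R^2)⁻¹ ≤ u⁻¹ := inv_anti₀ hu0 hden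
    have h8 : u⁻¹ ≤ Real.sqrt 5 * (Real.sqrt (x-1))⁻¹ := by
      rw [← div_eq_mul_inv, le_div_iff₀ hsx, inv_mul_eq_div, div_le_iff₀ hu0]
      linarith [hsq]
    rw [rpow_neg_half_eq hx1.le]
    linarith
  · have hR2 : R ≤ 1/2 := by
      rcases lt_or_ge (1/2 : ℝ) R with h | h
      · exfalso
        have h2 := (K_strictAntiOn.lt_iff_gt (Rm_mem hRm hx)
          (⟨by norm_num, by norm_num⟩ : (1/2:ℝ) ∈ Set.Ioc 0 1)).mpr h
        rw [hmem.2.2] at h2; linarith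
      · exact h
    have h1 : (3:ℝ)/4 ≤ 1 - R^2 := by nlinarith [hmem.1]
    have h2 : (1 - R^2)⁻¹ ≤ 4/3 := by
      have := inv_anti₀ (by norm_num : (0:ℝ) < 3/4) h1
      norm_num at this; linarith
    have h3 : 0 ≤ Real.sqrt 5 * (x-1) ^ (-(1/2):ℝ) := by positivity
    linarith

include hRp in
lemma Rp_F_bound {x : ℝ} (hx : 1 < x) :
    (Rp x ^ 2 - 1)⁻¹ ≤ 1 + Real.sqrt 3 * (x - 1) ^ (-(1/2) : ℝ) := by
  have hmem := hRp x hx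
  set R := Rp x with hRdef
  have hx1 : (0:ℝ) < x - 1 := by linarith
  rcases le_or_gt x (K (9/5)) with hcase | hcase
  · have hR2 : R ≤ 9/5 := by
      by_contra h
      push_neg at h
      have h2 := (K_strictMonoOn.lt_iff_lt
        (mem_Ici.2 (by norm_num : (1:ℝ) ≤ 9/5)) (Rp_mem hRp hx)).mpr h
      rw [hmem.2] at h2; linarith
    set v := R - 1 with hv
    have hv0 : 0 < v := by simp only [hv]; linarith [hmem.1]
    have hv2 : v ≤ 4/5 := by simp only [hv]; linarith
    have key : x ≤ Real.exp (3/2 * v^2) := by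
      rw [← hmem.2]
      have hinv : R⁻¹ ≤ Real.exp (-(v / R)) := by
        rw [Real.exp_neg]
        have h := exp_div_le_one_add hv0.le
        rw [show (1:ℝ) + v = R from by simp [hv]] at h
        exact inv_anti₀ (Real.exp_pos _) h
      calc K R = Real.exp ((R^2-1)/2) * R⁻¹ := div_eq_mul_inv _ _
        _ ≤ Real.exp ((R^2-1)/2) * Real.exp (-(v / R)) :=
            mul_le_mul_of_nonneg_left hinv (Real.exp_pos _).le
        _ = Real.exp ((R^2-1)/2 + -(v/R)) := (Real.exp_add _ _).symm
        _ ≤ Real.exp (3/2 * v^2) := by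
            apply Real.exp_le_exp.2
            have hRpos : (0:ℝ) < R := by linarith [hmem.1]
            have hdiv : v - v^2 ≤ v / R := by
              rw [le_div_iff₀ hRpos]
              nlinarith
            nlinarith
    have hx3v : x - 1 ≤ 3 * v^2 := by
      have ht : 3/2 * v^2 ≤ 1 := by nlinarith
      have h5 := exp_le_one_add_two_mul (by positivity) ht
      nlinarith [key.trans h5]
    have hsq : Real.sqrt (x - 1) ≤ Real.sqrt 3 * v := by
      have h6 : Real.sqrt (x-1) ≤ Real.sqrt (3 * v^2) := Real.sqrt_le_sqrt hx3v
      rwa [Real.sqrt_mul (by norm_num) _, Real.sqrt_sq hv0.le] at h6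
    have hden : v ≤ R^2 - 1 := by nlinarith [hmem.1]
    have hsx : 0 < Real.sqrt (x-1) := Real.sqrt_pos.2 hx1
    have h7 : (R^2 - 1)⁻¹ ≤ v⁻¹ := inv_anti₀ hv0 hden
    have h8 : v⁻¹ ≤ Real.sqrt 3 * (Real.sqrt (x-1))⁻¹ := by
      rw [← div_eq_mul_inv, le_div_iff₀ hsx, inv_mul_eq_div, div_le_iff₀ hv0]
      linarith [hsq]
    rw [rpow_neg_half_eq hx1.le]
    linarith
  · have hR2 : (9:ℝ)/5 ≤ R := by
      rcases lt_or_ge R (9/5 : ℝ) with h | h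
      · exfalso
        have h2 := (K_strictMonoOn.lt_iff_lt (Rp_mem hRp hx)
          (mem_Ici.2 (by norm_num : (1:ℝ) ≤ 9/5))).mpr h
        rw [hmem.2] at h2; linarith
      · exact h
    have h1 : (1:ℝ) ≤ R^2 - 1 := by nlinarith
    have h2 : (R^2 - 1)⁻¹ ≤ 1 := by
      have := inv_anti₀ (by norm_num : (0:ℝ) < 1) h1
      norm_num at this; linarith
    have h3 : 0 ≤ Real.sqrt 3 * (x-1) ^ (-(1/2):ℝ) := by positivity
    linarith

end RmRp

theorem stmt_4 (Rm Rp : ℝ → ℝ)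
    (hRm : ∀ x : ℝ, 1 < x → 0 < Rm x ∧ Rm x < 1 ∧ K (Rm x) = x)
    (hRp : ∀ x : ℝ, 1 < x → 1 < Rp x ∧ K (Rp x) = x)
    (c c' : ℝ) (hc : 2 / Real.sqrt 3 ≤ c) (hcc' : c < c') :
    (∫ ψ in (π / 3)..(2 * π / 3), (1 - (Rm (c' * Real.sin ψ)) ^ 2)⁻¹) <
      (∫ ψ in (π / 3)..(2 * π / 3), (1 - (Rm (c * Real.sin ψ)) ^ 2)⁻¹) ∧
    (∫ ψ in (π / 3)..(2 * π / 3), ((Rp (c' * Real.sin ψ)) ^ 2 - 1)⁻¹) <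
      (∫ ψ in (π / 3)..(2 * π / 3), ((Rp (c * Real.sin ψ)) ^ 2 - 1)⁻¹) := by
  constructor
  · apply key_lt (F := fun x => (1 - Rm x ^ 2)⁻¹) ?_ ?_ ?_
      (D := 4/3) (C := Real.sqrt 5) (by norm_num) (Real.sqrt_nonneg 5)
      (fun x hx => Rm_F_bound hRm hx) hc hcc'
    · intro x hx
      have hx1 : 1 < x := hx
      have hmem := hRm x hx1
      have hden : 1 - Rm x ^ 2 ≠ 0 := by nlinarith [hmem.1, hmem.2.1]
      exact ((continuousAt_const.sub ((Rm_continuousAt hRm hx1).pow 2)).inv₀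
        hden).continuousWithinAt
    · intro x hx
      have hmem := hRm x hx
      exact inv_pos.2 (by nlinarith [hmem.1, hmem.2.1])
    · intro x y hx hxy
      have hy := hx.trans hxy
      have h := Rm_anti hRm hx hxy
      have h1 := hRm x hx
      have h2 := hRm y hy
      have hb : 0 < 1 - Rm x ^ 2 := by nlinarith [h1.1, h1.2.1]
      exact inv_strictAnti₀ hb (by nlinarith [h2.1])
  · apply key_lt (F := fun x => (Rp x ^ 2 - 1)⁻¹) ?_ ?_ ?_
      (D := 1) (C := Real.sqrt 3) (by norm_num) (Real.sqrt_nonneg 3)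
      (fun x hx => Rp_F_bound hRp hx) hc hcc'
    · intro x hx
      have hx1 : 1 < x := hx
      have hmem := hRp x hx1
      have hden : Rp x ^ 2 - 1 ≠ 0 := by nlinarith [hmem.1]
      exact ((((Rp_continuousAt hRp hx1).pow 2).sub continuousAt_const).inv₀
        hden).continuousWithinAt
    · intro x hx
      have hmem := hRp x hx
      exact inv_pos.2 (by nlinarith [hmem.1])
    · intro x y hx hxy
      have hy := hx.trans hxy
      have h := Rp_mono hRp hx hxy
      have h1 := hRp x hx
      have h2 := hRp y hy
      have hb : 0 < Rp x ^ 2 - 1 := by nlinarith [h1.1]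
      exact inv_strictAnti₀ hb (by nlinarith [h1.1])
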